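/- For every real r > 1 there exists a constant C_r > 0 such that for every τ ≥ 0 and all a, b, c : ℤ² → [0,∞]: ∑_{(j,k)∈ℤ²×ℤ²} ‖j‖ · a(j) · b(k) · ‖j+k‖^{r} e^{τ‖j+k‖} · c(j+k) ≤ C_r [ S_{r+1/2,τ}(a) · (b(0) + S_{r,τ}(b)) · S_{r+1/2,τ}(c) + S_{r+1/2,τ}(a) · S_{r+1/2,τ}(b) · S_{r,τ}(c) ]. (This is the Fourier-coefficient form of the divergence estimate |⟨A^r e^{τA}((∇·f)g), A^r e^{τA}h⟩| of Lemma A.3.) -/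

import Mathlib

open scoped ENNReal

noncomputable section

/-- Euclidean norm of a lattice point `k ∈ ℤ²` viewed as a vector in `ℝ²`. -/
def nz (k : ℤ × ℤ) : ℝ := Real.sqrt ((k.1 : ℝ) ^ 2 + (k.2 : ℝ) ^ 2)

/-- The weighted ℓ²-norm `S_{ρ,τ}(a) = (∑_k ‖k‖^{2ρ} e^{2τ‖k‖} a(k)²)^{1/2}`. -/
def S (ρ τ : ℝ) (a : ℤ × ℤ → ℝ≥0∞) : ℝ≥0∞ :=
  (∑' k : ℤ × ℤ, ENNReal.ofReal (nz k ^ (2 * ρ) * Real.exp (2 * τ * nz k)) * (a k) ^ 2)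
    ^ ((1 : ℝ) / 2)

namespace DivAux

abbrev V := ℤ × ℤ

/-! ### Basic facts about `nz` -/

lemma nz_nonneg (k : V) : 0 ≤ nz k := Real.sqrt_nonneg _

lemma nz_zero : nz 0 = 0 := by simp [nz]

lemma nz_eq_abs (k : V) : nz k = ‖(⟨(k.1 : ℝ), (k.2 : ℝ)⟩ : ℂ)‖ := by
  rw [Complex.norm_def, Complex.normSq_mk, nz]; ring_nf

lemma nz_add_le (j k : V) : nz (j + k) ≤ nz j + nz k := by
  rw [nz_eq_abs, nz_eq_abs, nz_eq_abs]
  have : (⟨((j+k).1 : ℝ), ((j+k).2 : ℝ)⟩ : ℂ) = ⟨(j.1:ℝ), (j.2:ℝ)⟩ + ⟨(k.1:ℝ), (k.2:ℝ)⟩ := by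
    apply Complex.ext <;> simp [Complex.add_re, Complex.add_im]
  rw [this]
  exact norm_add_le _ _

lemma one_le_nz {k : V} (h : k ≠ 0) : 1 ≤ nz k := by
  have h1 : (1:ℝ) ≤ (k.1:ℝ)^2 + (k.2:ℝ)^2 := by
    have : k.1 ≠ 0 ∨ k.2 ≠ 0 := by
      by_contra hc; push_neg at hc; exact h (Prod.ext hc.1 hc.2)
    rcases this with h' | h'
    · have : (1:ℤ) ≤ k.1^2 := by have := Int.one_le_abs (by simpa using h'); nlinarith [sq_abs k.1]
      have h2 : (1:ℝ) ≤ (k.1:ℝ)^2 := by exact_mod_cast this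
      nlinarith [sq_nonneg (k.2:ℝ)]
    · have : (1:ℤ) ≤ k.2^2 := by have := Int.one_le_abs (by simpa using h'); nlinarith [sq_abs k.2]
      have h2 : (1:ℝ) ≤ (k.2:ℝ)^2 := by exact_mod_cast this
      nlinarith [sq_nonneg (k.1:ℝ)]
  calc (1:ℝ) = Real.sqrt 1 := Real.sqrt_one.symm
    _ ≤ nz k := Real.sqrt_le_sqrt h1

lemma nz_pos {k : V} (h : k ≠ 0) : 0 < nz k := lt_of_lt_of_le one_pos (one_le_nz h)

lemma nz_sub_le (j k : V) : nz j ≤ nz (j + k) + nz k := by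
  have h := nz_add_le (j + k) (-k)
  have e1 : (⟨((-k).1:ℝ), ((-k).2:ℝ)⟩ : ℂ) = -⟨(k.1:ℝ),(k.2:ℝ)⟩ := by
    apply Complex.ext <;> simp
  have e2 : nz (-k) = nz k := by rw [nz_eq_abs, nz_eq_abs, e1, norm_neg]
  simpa [e2] using h

/-! ### ℓ² norm, Cauchy-Schwarz and Young-type inequalities -/

def L2 (f : V → ℝ≥0∞) : ℝ≥0∞ := (∑' k, f k ^ 2) ^ ((1:ℝ)/2)

lemma cs_tsum {ι : Type*} [Countable ι] (f g : ι → ℝ≥0∞) :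
    ∑' i, f i * g i ≤ (∑' i, f i ^ 2) ^ ((1:ℝ)/2) * (∑' i, g i ^ 2) ^ ((1:ℝ)/2) := by
  classical
  letI : MeasurableSpace ι := ⊤
  haveI : MeasurableSingletonClass ι := ⟨fun _ => trivial⟩
  have hconj : (2:ℝ).HolderConjugate 2 := ⟨by norm_num, by norm_num, by norm_num⟩
  have h := ENNReal.lintegral_mul_le_Lp_mul_Lq (MeasureTheory.Measure.count : MeasureTheory.Measure ι) hconj
    (measurable_of_countable f).aemeasurable (measurable_of_countable g).aemeasurable
  simp only [MeasureTheory.lintegral_count, Pi.mul_apply] at h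
  have h2 : ∀ h : ι → ℝ≥0∞, (∑' i, h i ^ (2:ℝ)) = ∑' i, h i ^ 2 := by
    intro h; congr 1; ext i; rw [← ENNReal.rpow_natCast (h i) 2]; norm_num
  rwa [h2 f, h2 g] at h

lemma cs_tsum' (f g : V → ℝ≥0∞) : ∑' i, f i * g i ≤ L2 f * L2 g := cs_tsum f g

lemma L2_mono {f g : V → ℝ≥0∞} (h : ∀ k, f k ≤ g k) : L2 f ≤ L2 g := by
  unfold L2
  exact ENNReal.rpow_le_rpow (ENNReal.tsum_le_tsum (fun k => pow_le_pow_left' (h k) 2)) (by norm_num)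

lemma young1 (F G H : V → ℝ≥0∞) :
    (∑' p : V × V, F p.1 * G p.2 * H (p.1 + p.2)) ≤ (∑' k, G k) * (L2 F * L2 H) := by
  calc (∑' p : V × V, F p.1 * G p.2 * H (p.1 + p.2))
      = ∑' (j : V) (k : V), F j * G k * H (j + k) :=
        ENNReal.tsum_prod (f := fun j k => F j * G k * H (j + k))
    _ = ∑' (k : V) (j : V), F j * G k * H (j + k) := ENNReal.tsum_comm
    _ = ∑' (k : V), G k * ∑' (j : V), F j * H (j + k) := by
        congr 1; ext k; rw [← ENNReal.tsum_mul_left]; congr 1; ext j; ring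
    _ ≤ ∑' (k : V), G k * (L2 F * L2 H) := by
        refine ENNReal.tsum_le_tsum fun k => mul_le_mul_right ?_ _
        refine (cs_tsum' F (fun j => H (j + k))).trans ?_
        have : L2 (fun j => H (j + k)) = L2 H := by
          unfold L2; congr 1
          exact (Equiv.addRight k).tsum_eq (fun j => H j ^ 2)
        rw [this]
    _ = (∑' k, G k) * (L2 F * L2 H) := ENNReal.tsum_mul_right

lemma young2 (F G H : V → ℝ≥0∞) :
    (∑' p : V × V, F p.1 * G p.2 * H (p.1 + p.2)) ≤ (∑' l, H l) * (L2 F * L2 G) := by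
  calc (∑' p : V × V, F p.1 * G p.2 * H (p.1 + p.2))
      = ∑' (j : V) (k : V), F j * G k * H (j + k) :=
        ENNReal.tsum_prod (f := fun j k => F j * G k * H (j + k))
    _ = ∑' (j : V) (l : V), F j * G (l - j) * H l := by
        congr 1; ext j
        rw [← (Equiv.addLeft j).tsum_eq (fun l => F j * G (l - j) * H l)]
        simp [Equiv.addLeft]
    _ = ∑' (l : V) (j : V), F j * G (l - j) * H l := ENNReal.tsum_comm
    _ = ∑' (l : V), H l * ∑' (j : V), F j * G (l - j) := by
        congr 1; ext l; rw [← ENNReal.tsum_mul_left]; congr 1; ext j; ring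
    _ ≤ ∑' (l : V), H l * (L2 F * L2 G) := by
        refine ENNReal.tsum_le_tsum fun l => mul_le_mul_right ?_ _
        refine (cs_tsum' F (fun j => G (l - j))).trans ?_
        have : L2 (fun j => G (l - j)) = L2 G := by
          unfold L2; congr 1
          exact (Equiv.subLeft l).tsum_eq (fun j => G j ^ 2)
        rw [this]
    _ = (∑' l, H l) * (L2 F * L2 G) := ENNReal.tsum_mul_right

/-! ### Weights -/

def w (ρ : ℝ) (k : V) : ℝ≥0∞ := ENNReal.ofReal (nz k ^ ρ)

def del (f : V → ℝ≥0∞) (k : V) : ℝ≥0∞ := if k = 0 then 0 else f k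

def u (r : ℝ) (k : V) : ℝ≥0∞ := if k = 0 then 0 else ENNReal.ofReal (nz k ^ (-r))

lemma w_zero' {ρ : ℝ} (hρ : ρ ≠ 0) : w ρ 0 = 0 := by
  simp [w, nz_zero, Real.zero_rpow hρ]

lemma w_exp_zero (k : V) : w 0 k = 1 := by simp [w]

lemma w_add {ρ σ : ℝ} (h : ρ + σ ≠ 0) (k : V) : w (ρ + σ) k = w ρ k * w σ k := by
  rw [w, w, w, Real.rpow_add' (nz_nonneg k) h,
    ENNReal.ofReal_mul (Real.rpow_nonneg (nz_nonneg k) _)]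

lemma w_sq {ρ : ℝ} (hρ : ρ ≠ 0) (k : V) : (w ρ k) ^ 2 = w (2 * ρ) k := by
  have h : ρ + ρ ≠ 0 := fun h => hρ (by linarith)
  rw [sq, two_mul, w_add h]

lemma w_mono {ρ σ : ℝ} (h0 : 0 < ρ) (h : ρ ≤ σ) (k : V) : w ρ k ≤ w σ k := by
  by_cases hk : k = 0
  · subst hk; rw [w_zero' (ne_of_gt h0), w_zero' (ne_of_gt (lt_of_lt_of_le h0 h))]
  · exact ENNReal.ofReal_le_ofReal
      (Real.rpow_le_rpow_of_exponent_le (one_le_nz hk) h)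

lemma one_le_w {ρ : ℝ} (hρ : 0 ≤ ρ) {k : V} (hk : k ≠ 0) : 1 ≤ w ρ k := by
  have : (1:ℝ) ≤ nz k ^ ρ := by
    calc (1:ℝ) = nz k ^ (0:ℝ) := (Real.rpow_zero _).symm
      _ ≤ nz k ^ ρ := Real.rpow_le_rpow_of_exponent_le (one_le_nz hk) hρ
  calc (1:ℝ≥0∞) = ENNReal.ofReal 1 := ENNReal.ofReal_one.symm
    _ ≤ w ρ k := ENNReal.ofReal_le_ofReal this

/-- triangle-type inequality for the `r`-weight. -/
lemma w_r_triangle {r : ℝ} (hr : 0 ≤ r) (j k : V) :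
    w r (j + k) ≤ ENNReal.ofReal (2 ^ r) * (w r j + w r k) := by
  have key : nz (j + k) ^ r ≤ 2 ^ r * (nz j ^ r + nz k ^ r) := by
    have h1 : nz (j + k) ≤ nz j + nz k := nz_add_le j k
    have h2 : nz j + nz k ≤ 2 * max (nz j) (nz k) := by
      rcases le_total (nz j) (nz k) with h | h
      · rw [max_eq_right h]; linarith
      · rw [max_eq_left h]; linarith
    have h3 : nz (j + k) ^ r ≤ (2 * max (nz j) (nz k)) ^ r :=
      Real.rpow_le_rpow (nz_nonneg _) (h1.trans h2) hr
    have h4 : (2 * max (nz j) (nz k)) ^ r = 2 ^ r * max (nz j) (nz k) ^ r :=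
      Real.mul_rpow (by norm_num) (le_max_of_le_left (nz_nonneg j))
    have h5 : max (nz j) (nz k) ^ r ≤ nz j ^ r + nz k ^ r := by
      rcases le_total (nz j) (nz k) with h | h
      · rw [max_eq_right h]
        have := Real.rpow_nonneg (nz_nonneg j) r; linarith
      · rw [max_eq_left h]
        have := Real.rpow_nonneg (nz_nonneg k) r; linarith
    calc nz (j + k) ^ r ≤ 2 ^ r * max (nz j) (nz k) ^ r := by rw [← h4]; exact h3
      _ ≤ 2 ^ r * (nz j ^ r + nz k ^ r) :=
        mul_le_mul_of_nonneg_left h5 (Real.rpow_nonneg (by norm_num) r)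
  calc w r (j + k) ≤ ENNReal.ofReal (2 ^ r * (nz j ^ r + nz k ^ r)) :=
        ENNReal.ofReal_le_ofReal key
    _ = ENNReal.ofReal (2 ^ r) * (w r j + w r k) := by
        rw [ENNReal.ofReal_mul (Real.rpow_nonneg (by norm_num) r),
          ENNReal.ofReal_add (Real.rpow_nonneg (nz_nonneg j) r) (Real.rpow_nonneg (nz_nonneg k) r)]
        rfl

/-- square-root subadditivity in weight form. -/
lemma w_half_triangle (j k : V) : w (1/2) j ≤ w (1/2) (j + k) + w (1/2) k := by
  have key : nz j ^ ((1:ℝ)/2) ≤ nz (j + k) ^ ((1:ℝ)/2) + nz k ^ ((1:ℝ)/2) := by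
    have h1 : nz j ≤ nz (j + k) + nz k := nz_sub_le j k
    have e : ∀ x : ℝ, x ^ ((1:ℝ)/2) = Real.sqrt x := fun x => (Real.sqrt_eq_rpow x).symm
    rw [e, e, e]
    have hsub : ∀ x y : ℝ, 0 ≤ x → 0 ≤ y →
        Real.sqrt (x + y) ≤ Real.sqrt x + Real.sqrt y := by
      intro x y hx hy
      have hk : x + y ≤ (Real.sqrt x + Real.sqrt y) ^ 2 := by
        nlinarith [Real.sq_sqrt hx, Real.sq_sqrt hy, Real.sqrt_nonneg x, Real.sqrt_nonneg y,
          mul_nonneg (Real.sqrt_nonneg x) (Real.sqrt_nonneg y)]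
      calc Real.sqrt (x + y) ≤ Real.sqrt ((Real.sqrt x + Real.sqrt y) ^ 2) :=
            Real.sqrt_le_sqrt hk
        _ = Real.sqrt x + Real.sqrt y := Real.sqrt_sq (by positivity)
    calc Real.sqrt (nz j) ≤ Real.sqrt (nz (j+k) + nz k) := Real.sqrt_le_sqrt h1
      _ ≤ Real.sqrt (nz (j+k)) + Real.sqrt (nz k) :=
        hsub _ _ (nz_nonneg _) (nz_nonneg _)
  calc w (1/2) j ≤ ENNReal.ofReal (nz (j+k) ^ ((1:ℝ)/2) + nz k ^ ((1:ℝ)/2)) :=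
        ENNReal.ofReal_le_ofReal key
    _ = w (1/2) (j + k) + w (1/2) k := by
        rw [ENNReal.ofReal_add (Real.rpow_nonneg (nz_nonneg _) _) (Real.rpow_nonneg (nz_nonneg _) _)]
        rfl

/-! ### ℓ¹ bounds from weighted ℓ² bounds -/

lemma summable_g {b : ℝ} (hb : 1 < b) : Summable (fun n : ℤ => (1 + |(n:ℝ)|) ^ (-b)) := by
  apply Summable.of_nat_of_neg
  on_goal 2 => simp_rw [Int.cast_neg, abs_neg]
  all_goals
    simp_rw [Int.cast_natCast, fun n : ℕ => abs_of_nonneg (n.cast_nonneg : 0 ≤ (n : ℝ))]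
    have h0 : Summable (fun n : ℕ => ((n:ℝ)) ^ (-b)) :=
      Real.summable_nat_rpow.mpr (by linarith)
    have h2 := (summable_nat_add_iff (f := fun n : ℕ => ((n:ℝ)) ^ (-b)) 1).mpr h0
    exact h2.congr (fun n => by push_cast; rw [add_comm])

lemma zeta_ne_top {s : ℝ} (hs : 2 < s) :
    (∑' k : V, (if k = 0 then 0 else ENNReal.ofReal (nz k ^ (-s)))) ≠ ⊤ := by
  set g : ℤ → ℝ := fun n => (1 + |(n:ℝ)|) ^ (-(s/2)) with hg
  have hgnn : ∀ n, 0 ≤ g n := fun n => Real.rpow_nonneg (by positivity) _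
  have hgsum : Summable g := summable_g (by linarith)
  have hpt : ∀ k : V, (if k = 0 then 0 else ENNReal.ofReal (nz k ^ (-s)))
      ≤ ENNReal.ofReal (2 ^ s) * (ENNReal.ofReal (g k.1) * ENNReal.ofReal (g k.2)) := by
    intro k
    by_cases hk : k = 0
    · simp [hk]
    · simp only [hk, if_false]
      rw [← ENNReal.ofReal_mul (by positivity), ← ENNReal.ofReal_mul (by positivity)]
      apply ENNReal.ofReal_le_ofReal
      have hone := one_le_nz hk
      have habs1 : |(k.1:ℝ)| ≤ nz k := by
        rw [← Real.sqrt_sq_eq_abs]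
        exact Real.sqrt_le_sqrt (by nlinarith [sq_nonneg ((k.2:ℝ))])
      have habs2 : |(k.2:ℝ)| ≤ nz k := by
        rw [← Real.sqrt_sq_eq_abs]
        exact Real.sqrt_le_sqrt (by nlinarith [sq_nonneg ((k.1:ℝ))])
      have h10 : 1 + |(k.1:ℝ)| ≤ 2 * nz k := by linarith
      have h11 : 1 + |(k.2:ℝ)| ≤ 2 * nz k := by linarith
      have key : nz k ^ (-s) ≤ (2:ℝ) ^ s * ((1 + |(k.1:ℝ)|) ^ (-(s/2)) * (1 + |(k.2:ℝ)|) ^ (-(s/2))) := by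
        have hnz := nz_pos hk
        have e1 : (1 + |(k.1:ℝ)|) ^ (-(s/2)) * (1 + |(k.2:ℝ)|) ^ (-(s/2))
            = ((1 + |(k.1:ℝ)|) * (1 + |(k.2:ℝ)|)) ^ (-(s/2)) :=
          (Real.mul_rpow (by positivity) (by positivity)).symm
        rw [e1]
        have e2 : ((1 + |(k.1:ℝ)|) * (1 + |(k.2:ℝ)|)) ^ (-(s/2)) ≥ (4 * nz k ^ (2:ℝ)) ^ (-(s/2)) := by
          apply Real.rpow_le_rpow_of_nonpos (by positivity) ?_ (by linarith)
          have : nz k ^ (2:ℝ) = nz k ^ 2 := by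
            rw [show (2:ℝ) = ((2:ℕ):ℝ) by norm_num, Real.rpow_natCast]
          rw [this]
          nlinarith [mul_le_mul h10 h11 (by positivity) (by positivity : (0:ℝ) ≤ 2 * nz k)]
        have e3 : (4 * nz k ^ (2:ℝ)) ^ (-(s/2)) = 4 ^ (-(s/2)) * nz k ^ (-s) := by
          rw [Real.mul_rpow (by norm_num) (by positivity), ← Real.rpow_mul (nz_nonneg k),
            show (2:ℝ) * (-(s/2)) = -s by ring]
        have e4 : (4:ℝ) ^ (-(s/2)) = ((2:ℝ)^s)⁻¹ := by
          rw [show (4:ℝ) = 2 ^ (2:ℝ) by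
            rw [show (2:ℝ) = ((2:ℕ):ℝ) by norm_num, Real.rpow_natCast]; norm_num,
            ← Real.rpow_mul (by norm_num), ← Real.rpow_neg (by norm_num)]
          ring_nf
        calc nz k ^ (-s) = (2:ℝ)^s * (4 ^ (-(s/2)) * nz k ^ (-s)) := by
              rw [e4]; field_simp
          _ ≤ (2:ℝ)^s * ((1 + |(k.1:ℝ)|) * (1 + |(k.2:ℝ)|)) ^ (-(s/2)) := by
              rw [← e3]; exact mul_le_mul_of_nonneg_left e2 (by positivity)
      exact key
  have hfin : ENNReal.ofReal (2 ^ s) * ((∑' n : ℤ, ENNReal.ofReal (g n)) * (∑' n : ℤ, ENNReal.ofReal (g n))) ≠ ⊤ := by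
    have : (∑' n : ℤ, ENNReal.ofReal (g n)) = ENNReal.ofReal (∑' n, g n) :=
      (ENNReal.ofReal_tsum_of_nonneg hgnn hgsum).symm
    rw [this]
    exact ENNReal.mul_ne_top ENNReal.ofReal_ne_top
      (ENNReal.mul_ne_top ENNReal.ofReal_ne_top ENNReal.ofReal_ne_top)
  refine ne_top_of_le_ne_top hfin ?_
  calc (∑' k : V, (if k = 0 then 0 else ENNReal.ofReal (nz k ^ (-s))))
      ≤ ∑' k : V, ENNReal.ofReal (2 ^ s) * (ENNReal.ofReal (g k.1) * ENNReal.ofReal (g k.2)) :=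
        ENNReal.tsum_le_tsum hpt
    _ = ENNReal.ofReal (2 ^ s) * ∑' k : V, (ENNReal.ofReal (g k.1) * ENNReal.ofReal (g k.2)) :=
        ENNReal.tsum_mul_left
    _ = ENNReal.ofReal (2 ^ s) * ((∑' n : ℤ, ENNReal.ofReal (g n)) * (∑' n : ℤ, ENNReal.ofReal (g n))) := by
        congr 1
        rw [ENNReal.tsum_prod (f := fun a b => ENNReal.ofReal (g a) * ENNReal.ofReal (g b))]
        simp_rw [ENNReal.tsum_mul_left, ENNReal.tsum_mul_right]

lemma L2_u_ne_top {r : ℝ} (hr : 1 < r) : L2 (u r) ≠ ⊤ := by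
  have hz := zeta_ne_top (s := 2 * r) (by linarith)
  have he : ∀ k : V, (u r k) ^ 2 = (if k = 0 then 0 else ENNReal.ofReal (nz k ^ (-(2*r)))) := by
    intro k
    by_cases hk : k = 0
    · simp [u, hk]
    · simp only [u, hk, if_false]
      rw [← ENNReal.ofReal_pow (Real.rpow_nonneg (nz_nonneg k) _)]
      congr 1
      rw [sq, ← Real.rpow_add (nz_pos hk)]
      ring_nf
  unfold L2
  rw [tsum_congr he]
  exact ENNReal.rpow_ne_top_of_nonneg (by norm_num) hz

/-- ℓ¹–ℓ² bound: `∑ ‖k‖^σ f'(k) ≤ K · ‖ ‖k‖^{σ+r} f ‖₂`. -/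
lemma l1_le {r : ℝ} (hr : 1 < r) {σ : ℝ} (f : V → ℝ≥0∞) :
    ∑' k, w σ k * del f k ≤ L2 (u r) * L2 (fun k => w (σ + r) k * f k) := by
  have he : ∀ k, w σ k * del f k = u r k * (w (σ + r) k * f k) := by
    intro k
    by_cases hk : k = 0
    · simp [del, u, hk]
    · simp only [del, u, hk, if_false]
      rw [← mul_assoc]
      congr 1
      rw [w, w, ← ENNReal.ofReal_mul (Real.rpow_nonneg (nz_nonneg k) _),
        ← Real.rpow_add (nz_pos hk)]
      congr 1
      ring
  rw [tsum_congr he]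
  exact cs_tsum' (u r) (fun k => w (σ + r) k * f k)

/-! ### Rewriting `S` -/

def Ex (τ : ℝ) (k : V) : ℝ≥0∞ := ENNReal.ofReal (Real.exp (τ * nz k))

lemma one_le_Ex {τ : ℝ} (hτ : 0 ≤ τ) (k : V) : 1 ≤ Ex τ k := by
  calc (1:ℝ≥0∞) = ENNReal.ofReal 1 := ENNReal.ofReal_one.symm
    _ ≤ Ex τ k := ENNReal.ofReal_le_ofReal
        (Real.one_le_exp (mul_nonneg hτ (nz_nonneg k)))

lemma Ex_zero (τ : ℝ) : Ex τ 0 = 1 := by simp [Ex, nz_zero]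

lemma S_eq {ρ : ℝ} (hρ : 0 < ρ) (τ : ℝ) (a : V → ℝ≥0∞) :
    S ρ τ a = L2 (fun k => w ρ k * (Ex τ k * a k)) := by
  unfold S L2
  congr 1
  apply tsum_congr
  intro k
  have e1 : (w ρ k * (Ex τ k * a k)) ^ 2 = (w ρ k) ^ 2 * (Ex τ k) ^ 2 * (a k) ^ 2 := by ring
  rw [e1, w_sq (ne_of_gt hρ)]
  have e2 : (Ex τ k) ^ 2 = ENNReal.ofReal (Real.exp (2 * τ * nz k)) := by
    rw [Ex, ← ENNReal.ofReal_pow (Real.exp_nonneg _)]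
    congr 1
    rw [sq, ← Real.exp_add]
    ring_nf
  rw [e2, w]
  rw [ENNReal.ofReal_mul (Real.rpow_nonneg (nz_nonneg k) _)]

end DivAux

open DivAux

/-- Fourier-coefficient form of the divergence estimate
`|⟨A^r e^{τA}((∇·f)g), A^r e^{τA}h⟩|` of Lemma A.3. -/
theorem divergence_estimate :
    ∀ r : ℝ, 1 < r → ∃ C : ℝ, 0 < C ∧ ∀ τ : ℝ, 0 ≤ τ → ∀ a b c : ℤ × ℤ → ℝ≥0∞,
      (∑' p : (ℤ × ℤ) × (ℤ × ℤ),
          ENNReal.ofReal (nz p.1) * a p.1 * b p.2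
            * ENNReal.ofReal (nz (p.1 + p.2) ^ r * Real.exp (τ * nz (p.1 + p.2)))
            * c (p.1 + p.2))
        ≤ ENNReal.ofReal C *
            (S (r + 1 / 2) τ a * (b 0 + S r τ b) * S (r + 1 / 2) τ c
              + S (r + 1 / 2) τ a * S (r + 1 / 2) τ b * S r τ c) := by
  intro r hr
  have hr0 : (0:ℝ) < r := by linarith
  have hr12 : (0:ℝ) < r + 1/2 := by linarith
  set K : ℝ≥0∞ := L2 (u r) with hKdef
  have hKfin : K ≠ ⊤ := L2_u_ne_top hr
  set Kr : ℝ := K.toReal with hKrdef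
  have hKr0 : 0 ≤ Kr := ENNReal.toReal_nonneg
  have hK : K = ENNReal.ofReal Kr := (ENNReal.ofReal_toReal hKfin).symm
  have h2r : (0:ℝ) < 2 ^ r := Real.rpow_pos_of_pos (by norm_num) r
  refine ⟨1 + 3 * 2 ^ r * Kr, by positivity, ?_⟩
  intro τ hτ a b c
  set A : V → ℝ≥0∞ := fun k => Ex τ k * a k with hA
  set B : V → ℝ≥0∞ := fun k => Ex τ k * b k with hB
  set Cc : V → ℝ≥0∞ := fun k => Ex τ k * c k with hCc
  set C0 : V → ℝ≥0∞ := del Cc with hC0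
  have hC0le : ∀ k, C0 k ≤ Cc k := by
    intro k; by_cases hk : k = 0 <;> simp [hC0, del, hk]
  have hSa : S (r + 1/2) τ a = L2 (fun k => w (r+1/2) k * A k) := S_eq hr12 τ a
  have hSb : S (r + 1/2) τ b = L2 (fun k => w (r+1/2) k * B k) := S_eq hr12 τ b
  have hSrb : S r τ b = L2 (fun k => w r k * B k) := S_eq hr0 τ b
  have hSc : S (r + 1/2) τ c = L2 (fun k => w (r+1/2) k * Cc k) := S_eq hr12 τ c
  have hSrc : S r τ c = L2 (fun k => w r k * Cc k) := S_eq hr0 τ c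
  have hB0 : b 0 = B 0 := by rw [hB]; simp [Ex_zero]
  rw [hSa, hSb, hSrb, hSc, hSrc, hB0]
  set SA := L2 (fun k => w (r+1/2) k * A k) with hSA
  set SB := L2 (fun k => w (r+1/2) k * B k) with hSB
  set SrB := L2 (fun k => w r k * B k) with hSrB
  set SC := L2 (fun k => w (r+1/2) k * Cc k) with hSC
  set SrC := L2 (fun k => w r k * Cc k) with hSrC
  have hSrBle : SrB ≤ SB :=
    L2_mono (fun k => mul_le_mul_left (w_mono hr0 (by linarith) k) _)
  set Y : ℝ≥0∞ := SA * SB * SrC with hY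
  set X : ℝ≥0∞ := SA * (B 0 + SrB) * SC with hX
  -- Step 1 : bound the LHS by the tau-free expression
  set T : V × V → ℝ≥0∞ :=
    fun p => w 1 p.1 * A p.1 * B p.2 * (w r (p.1+p.2) * C0 (p.1+p.2)) with hT
  have step1 : (∑' p : (ℤ × ℤ) × (ℤ × ℤ),
      ENNReal.ofReal (nz p.1) * a p.1 * b p.2
        * ENNReal.ofReal (nz (p.1 + p.2) ^ r * Real.exp (τ * nz (p.1 + p.2)))
        * c (p.1 + p.2)) ≤ ∑' p : V × V, T p := by
    apply ENNReal.tsum_le_tsum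
    intro p
    have hXc : ENNReal.ofReal (nz (p.1+p.2) ^ r * Real.exp (τ * nz (p.1+p.2))) * c (p.1+p.2)
        = w r (p.1+p.2) * C0 (p.1+p.2) := by
      by_cases hl : p.1 + p.2 = 0
      · rw [hl]
        simp [w_zero' (ne_of_gt hr0), nz_zero, Real.zero_rpow (ne_of_gt hr0)]
      · simp only [hC0, del, hl, if_false, hCc]
        rw [ENNReal.ofReal_mul (Real.rpow_nonneg (nz_nonneg _) _)]
        rw [w, Ex]
        ring
    calc ENNReal.ofReal (nz p.1) * a p.1 * b p.2
          * ENNReal.ofReal (nz (p.1 + p.2) ^ r * Real.exp (τ * nz (p.1 + p.2)))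
          * c (p.1 + p.2)
        = w 1 p.1 * a p.1 * b p.2 * (w r (p.1+p.2) * C0 (p.1+p.2)) := by
          rw [← hXc, w, Real.rpow_one]; ring
      _ ≤ T p := by
          have ha : a p.1 ≤ Ex τ p.1 * a p.1 :=
            le_mul_of_one_le_left zero_le (one_le_Ex hτ p.1)
          have hb : b p.2 ≤ Ex τ p.2 * b p.2 :=
            le_mul_of_one_le_left zero_le (one_le_Ex hτ p.2)
          exact mul_le_mul' (mul_le_mul' (mul_le_mul_right ha _) hb) le_rfl
  -- Step 2 : diagonal / off-diagonal split
  set Td : V × V → ℝ≥0∞ :=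
    fun p => if p.2 = 0 then w 1 p.1 * A p.1 * B 0 * (w r p.1 * C0 p.1) else 0 with hTd
  set Tr : V × V → ℝ≥0∞ :=
    fun p => w 1 p.1 * A p.1 * del B p.2 * (w r (p.1+p.2) * C0 (p.1+p.2)) with hTr
  have hsplit : ∀ p : V × V, T p = Td p + Tr p := by
    intro p
    by_cases hk : p.2 = 0
    · simp [hT, hTd, hTr, del, hk]
    · simp [hT, hTd, hTr, del, hk]
  have hTsum : (∑' p : V × V, T p) = (∑' p : V × V, Td p) + ∑' p : V × V, Tr p := by
    rw [← ENNReal.tsum_add]; exact tsum_congr hsplit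
  -- Step 3 : diagonal bound
  have hdiag : (∑' p : V × V, Td p) ≤ B 0 * (SA * SC) := by
    have e : (∑' p : V × V, Td p) = ∑' j : V, w 1 j * A j * B 0 * (w r j * C0 j) := by
      rw [ENNReal.tsum_prod (f := fun j k => Td (j, k))]
      congr 1; ext j
      simp only [hTd]
      exact tsum_ite_eq 0 _
    rw [e]
    have hc1 : ∀ j : V, w 1 j * A j * B 0 * (w r j * C0 j)
        ≤ B 0 * ((w (r+1/2) j * A j) * (w (r+1/2) j * C0 j)) := by
      intro j
      have h1 : w 1 j * w r j ≤ w (r+1/2) j * w (r+1/2) j := by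
        rw [← w_add (show (1:ℝ) + r ≠ 0 by positivity),
          ← w_add (show (r+1/2) + (r+1/2) ≠ 0 by positivity)]
        exact w_mono (by linarith) (by linarith) j
      calc w 1 j * A j * B 0 * (w r j * C0 j)
          = B 0 * ((w 1 j * w r j) * (A j * C0 j)) := by ring
        _ ≤ B 0 * ((w (r+1/2) j * w (r+1/2) j) * (A j * C0 j)) := by gcongr
        _ = B 0 * ((w (r+1/2) j * A j) * (w (r+1/2) j * C0 j)) := by ring
    calc (∑' j : V, w 1 j * A j * B 0 * (w r j * C0 j))
        ≤ ∑' j : V, B 0 * ((w (r+1/2) j * A j) * (w (r+1/2) j * C0 j)) :=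
          ENNReal.tsum_le_tsum hc1
      _ = B 0 * ∑' j : V, ((w (r+1/2) j * A j) * (w (r+1/2) j * C0 j)) := ENNReal.tsum_mul_left
      _ ≤ B 0 * (SA * L2 (fun j => w (r+1/2) j * C0 j)) :=
          mul_le_mul_right (cs_tsum' _ _) _
      _ ≤ B 0 * (SA * SC) := by
          gcongr
          exact L2_mono (fun k => mul_le_mul_right (hC0le k) _)
  -- Step 4 : off-diagonal bound
  set U1a : V × V → ℝ≥0∞ := fun p =>
    (w (r+1/2) p.1 * A p.1) * del B p.2 * (w (1/2) (p.1+p.2) * C0 (p.1+p.2)) with hU1a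
  set U1b : V × V → ℝ≥0∞ := fun p =>
    (w (r+1/2) p.1 * A p.1) * (w (1/2) p.2 * del B p.2) * C0 (p.1+p.2) with hU1b
  set U2 : V × V → ℝ≥0∞ := fun p =>
    (w 1 p.1 * A p.1) * (w r p.2 * del B p.2) * C0 (p.1+p.2) with hU2
  have hrest : ∀ p : V × V, Tr p ≤ ENNReal.ofReal (2 ^ r) * (U1a p + U1b p + U2 p) := by
    intro p
    have eA : w r p.1 * w 1 p.1 = w (r + 1/2) p.1 * w (1/2) p.1 := by
      rw [← w_add (show r + 1 ≠ 0 by positivity),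
        ← w_add (show (r+1/2) + (1/2) ≠ 0 by positivity)]
      congr 1; ring
    calc Tr p
        = (w 1 p.1 * A p.1 * del B p.2 * C0 (p.1+p.2)) * w r (p.1+p.2) := by
          rw [hTr]; ring
      _ ≤ (w 1 p.1 * A p.1 * del B p.2 * C0 (p.1+p.2))
            * (ENNReal.ofReal (2 ^ r) * (w r p.1 + w r p.2)) :=
          mul_le_mul_right (w_r_triangle (le_of_lt hr0) p.1 p.2) _
      _ = ENNReal.ofReal (2 ^ r) *
            ((w r p.1 * w 1 p.1) * (A p.1 * del B p.2 * C0 (p.1+p.2)) + U2 p) := by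
          rw [hU2]; ring
      _ = ENNReal.ofReal (2 ^ r) *
            ((w (r+1/2) p.1 * w (1/2) p.1) * (A p.1 * del B p.2 * C0 (p.1+p.2)) + U2 p) := by
          rw [eA]
      _ ≤ ENNReal.ofReal (2 ^ r) *
            ((w (r+1/2) p.1 * (w (1/2) (p.1+p.2) + w (1/2) p.2))
              * (A p.1 * del B p.2 * C0 (p.1+p.2)) + U2 p) := by
          gcongr
          exact w_half_triangle p.1 p.2
      _ = ENNReal.ofReal (2 ^ r) * (U1a p + U1b p + U2 p) := by
          rw [hU1a, hU1b]; ring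
  -- auxiliary l1 bounds
  have hl1B : (∑' k, del B k) ≤ K * SrB := by
    have e : (∑' k, del B k) = ∑' k, w 0 k * del B k := by
      apply tsum_congr; intro k; rw [w_exp_zero, one_mul]
    rw [e]
    have := l1_le hr (σ := 0) B
    simp only [zero_add] at this
    rw [← hSrB, ← hKdef] at this
    exact this
  have hl1B' : (∑' k, w (1/2) k * del B k) ≤ K * SB := by
    have := l1_le hr (σ := 1/2) B
    rw [show (1:ℝ)/2 + r = r + 1/2 by ring] at this
    rw [← hSB, ← hKdef] at this
    exact this
  have hl1C : (∑' l, C0 l) ≤ K * SrC := by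
    have e : (∑' l, C0 l) = ∑' l, w 0 l * del Cc l := by
      apply tsum_congr; intro l; rw [w_exp_zero, one_mul, hC0]
    rw [e]
    have := l1_le hr (σ := 0) Cc
    simp only [zero_add] at this
    rw [← hSrC, ← hKdef] at this
    exact this
  -- the three Young-type bounds
  have hbU1a : (∑' p : V × V, U1a p) ≤ K * Y := by
    refine le_trans (young1 (fun j => w (r+1/2) j * A j) (del B)
      (fun l => w (1/2) l * C0 l)) ?_
    have hLH : L2 (fun l => w (1/2) l * C0 l) ≤ SrC := by
      rw [hSrC]
      refine L2_mono (fun l => ?_)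
      exact mul_le_mul (w_mono (by norm_num) (by linarith) l) (hC0le l) zero_le zero_le
    calc (∑' k, del B k) * (L2 (fun j => w (r+1/2) j * A j) * L2 (fun l => w (1/2) l * C0 l))
        ≤ (K * SrB) * (SA * SrC) := by
          rw [← hSA]; exact mul_le_mul' hl1B (mul_le_mul_right hLH _)
      _ = K * (SA * SrB * SrC) := by ring
      _ ≤ K * Y := by rw [hY]; gcongr
  have hbU1b : (∑' p : V × V, U1b p) ≤ K * Y := by
    refine le_trans (young1 (fun j => w (r+1/2) j * A j)
      (fun k => w (1/2) k * del B k) C0) ?_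
    have hLH : L2 C0 ≤ SrC := by
      rw [hSrC]
      refine L2_mono (fun l => ?_)
      by_cases hl : l = 0
      · simp [hC0, del, hl]
      · calc C0 l ≤ Cc l := hC0le l
          _ ≤ w r l * Cc l := le_mul_of_one_le_left zero_le (one_le_w (le_of_lt hr0) hl)
    calc (∑' k, w (1/2) k * del B k) * (L2 (fun j => w (r+1/2) j * A j) * L2 C0)
        ≤ (K * SB) * (SA * SrC) := by
          rw [← hSA]; exact mul_le_mul' hl1B' (mul_le_mul_right hLH _)
      _ = K * Y := by rw [hY]; ring
  have hbU2 : (∑' p : V × V, U2 p) ≤ K * Y := by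
    refine le_trans (young2 (fun j => w 1 j * A j) (fun k => w r k * del B k) C0) ?_
    have hF : L2 (fun j => w 1 j * A j) ≤ SA := by
      rw [hSA]
      exact L2_mono (fun j => mul_le_mul_left (w_mono (by norm_num) (by linarith) j) _)
    have hG : L2 (fun k => w r k * del B k) ≤ SB := by
      refine le_trans ?_ hSrBle
      rw [hSrB]
      refine L2_mono (fun k => mul_le_mul_right ?_ _)
      by_cases hk : k = 0 <;> simp [del, hk]
    calc (∑' l, C0 l) * (L2 (fun j => w 1 j * A j) * L2 (fun k => w r k * del B k))
        ≤ (K * SrC) * (SA * SB) := mul_le_mul' hl1C (mul_le_mul' hF hG)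
      _ = K * Y := by rw [hY]; ring
  -- put everything together
  have hrestsum : (∑' p : V × V, Tr p) ≤ ENNReal.ofReal (2 ^ r) * (3 * (K * Y)) := by
    calc (∑' p : V × V, Tr p)
        ≤ ∑' p : V × V, ENNReal.ofReal (2 ^ r) * (U1a p + U1b p + U2 p) :=
          ENNReal.tsum_le_tsum hrest
      _ = ENNReal.ofReal (2 ^ r) * ∑' p : V × V, (U1a p + U1b p + U2 p) :=
          ENNReal.tsum_mul_left
      _ = ENNReal.ofReal (2 ^ r) *
          ((∑' p : V × V, U1a p) + (∑' p : V × V, U1b p) + (∑' p : V × V, U2 p)) := by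
          rw [ENNReal.tsum_add, ENNReal.tsum_add]
      _ ≤ ENNReal.ofReal (2 ^ r) * (K * Y + K * Y + K * Y) := by
          gcongr
      _ = ENNReal.ofReal (2 ^ r) * (3 * (K * Y)) := by ring
  have honeC : (1:ℝ≥0∞) ≤ ENNReal.ofReal (1 + 3 * 2 ^ r * Kr) := by
    rw [← ENNReal.ofReal_one]
    exact ENNReal.ofReal_le_ofReal (by nlinarith)
  have hconst : ENNReal.ofReal (2 ^ r) * (3 * K) ≤ ENNReal.ofReal (1 + 3 * 2 ^ r * Kr) := by
    rw [hK, show (3:ℝ≥0∞) = ENNReal.ofReal 3 by norm_num,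
      ← ENNReal.ofReal_mul (by norm_num), ← ENNReal.ofReal_mul (by positivity)]
    exact ENNReal.ofReal_le_ofReal (by nlinarith)
  calc (∑' p : (ℤ × ℤ) × (ℤ × ℤ),
          ENNReal.ofReal (nz p.1) * a p.1 * b p.2
            * ENNReal.ofReal (nz (p.1 + p.2) ^ r * Real.exp (τ * nz (p.1 + p.2)))
            * c (p.1 + p.2))
      ≤ ∑' p : V × V, T p := step1
    _ = (∑' p : V × V, Td p) + ∑' p : V × V, Tr p := hTsum
    _ ≤ B 0 * (SA * SC) + ENNReal.ofReal (2 ^ r) * (3 * (K * Y)) :=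
        add_le_add hdiag hrestsum
    _ ≤ ENNReal.ofReal (1 + 3 * 2 ^ r * Kr) * X
        + ENNReal.ofReal (1 + 3 * 2 ^ r * Kr) * Y := by
        refine add_le_add ?_ ?_
        · have h1 : B 0 * (SA * SC) ≤ X := by
            rw [hX]
            calc B 0 * (SA * SC) = SA * B 0 * SC := by ring
              _ ≤ SA * (B 0 + SrB) * SC := by
                  exact mul_le_mul_left (mul_le_mul_right le_self_add _) _
          exact h1.trans (le_mul_of_one_le_left zero_le honeC)
        · calc ENNReal.ofReal (2 ^ r) * (3 * (K * Y))
              = (ENNReal.ofReal (2 ^ r) * (3 * K)) * Y := by ring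
            _ ≤ ENNReal.ofReal (1 + 3 * 2 ^ r * Kr) * Y := mul_le_mul_left hconst _
    _ = ENNReal.ofReal (1 + 3 * 2 ^ r * Kr) * (X + Y) := by ring

end
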